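/- Let $q > 2$ be real and let $\omega = \frac{\log(1/\rho)}{2(q-2)}$ for some $0 < \rho \leq 1/3$. Then for any real $y$ with $|y| < \omega$, one has $|1+y|^q \leq 1 + qy + \frac{\rho^{-1/2}}{2} q^2 y^2$. -/

import Mathlib

open Real Set

lemma taylor_aux (q M y : ℝ) (hq : 2 < q) (hy : -1 < y)
    (hM : ∀ t ∈ Set.uIcc 0 y, q * (q-1) * (1+t) ^ (q-2) ≤ M) :
    (1+y) ^ q ≤ 1 + q * y + M / 2 * y ^ 2 := by
  set h : ℝ → ℝ := fun t => 1 + q * t + M / 2 * t ^ 2 - (1+t) ^ q with hh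
  set h' : ℝ → ℝ := fun t => q + M * t - q * (1+t) ^ (q-1) with hh'
  have hder : ∀ t : ℝ, -1 < t → HasDerivAt h (h' t) t := by
    intro t ht
    have h1 : HasDerivAt (fun t : ℝ => (1+t) ^ q) (1 * q * (1+t) ^ (q-1)) t :=
      ((hasDerivAt_id t).const_add 1).rpow_const (Or.inr (show (1:ℝ) ≤ q by linarith))
    have h2 : HasDerivAt (fun t : ℝ => 1 + q * t + M / 2 * t ^ 2)
        (q + M / 2 * (2 * t)) t := by
      have := ((hasDerivAt_id t).const_mul q).const_add 1
      have h3 := (hasDerivAt_pow 2 t).const_mul (M / 2)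
      exact (this.add h3).congr_deriv (by norm_num)
    have := h2.sub h1
    exact this.congr_deriv (by simp only [hh']; ring)
  have hder' : ∀ t : ℝ, -1 < t →
      HasDerivAt h' (M - q * ((q-1) * (1+t) ^ (q-2))) t := by
    intro t ht
    have h1 : HasDerivAt (fun t : ℝ => (1+t) ^ (q-1))
        (1 * (q-1) * (1+t) ^ (q-1-1)) t :=
      ((hasDerivAt_id t).const_add 1).rpow_const (Or.inr (show (1:ℝ) ≤ q - 1 by linarith))
    have h2 : HasDerivAt (fun t : ℝ => q + M * t) (M) t := by
      simpa using ((hasDerivAt_id t).const_mul M).const_add q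
    have := h2.sub (h1.const_mul q)
    have hq2 : q - 1 - 1 = q - 2 := by ring
    rw [hq2] at this
    exact this.congr_deriv (by ring)
  have h'0 : h' 0 = 0 := by simp [hh']
  have h0 : h 0 = 0 := by simp [hh]
  rcases le_or_gt 0 y with hy0 | hy0
  · -- y ≥ 0 : work on Icc 0 y
    have hsub : Icc (0:ℝ) y ⊆ uIcc 0 y := by rw [uIcc_of_le hy0]
    have hmem : ∀ t ∈ Icc (0:ℝ) y, -1 < t := fun t ht => by
      have := ht.1; linarith
    have hmono' : MonotoneOn h' (Icc 0 y) := by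
      apply monotoneOn_of_deriv_nonneg (convex_Icc 0 y)
      · exact fun t ht => ((hder' t (hmem t ht)).continuousAt).continuousWithinAt
      · intro t ht
        rw [interior_Icc] at ht
        exact (hder' t (by have := ht.1; linarith)).differentiableAt.differentiableWithinAt
      · intro t ht
        rw [interior_Icc] at ht
        have ht' : -1 < t := by have := ht.1; linarith
        rw [(hder' t ht').deriv]
        have := hM t (hsub ⟨le_of_lt ht.1, le_of_lt ht.2⟩)
        linarith [this]
    have hmono : MonotoneOn h (Icc 0 y) := by
      apply monotoneOn_of_deriv_nonneg (convex_Icc 0 y)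
      · exact fun t ht => ((hder t (hmem t ht)).continuousAt).continuousWithinAt
      · intro t ht
        rw [interior_Icc] at ht
        exact (hder t (by have := ht.1; linarith)).differentiableAt.differentiableWithinAt
      · intro t ht
        rw [interior_Icc] at ht
        have ht' : -1 < t := by have := ht.1; linarith
        rw [(hder t ht').deriv]
        have := hmono' (left_mem_Icc.mpr hy0) ⟨le_of_lt ht.1, le_of_lt ht.2⟩ (le_of_lt ht.1)
        rw [h'0] at this
        exact this
    have := hmono (left_mem_Icc.mpr hy0) (right_mem_Icc.mpr hy0) hy0
    rw [h0] at this
    simp only [hh] at this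
    linarith
  · -- y < 0 : work on Icc y 0
    have hy0' : y ≤ 0 := le_of_lt hy0
    have hsub : Icc y (0:ℝ) ⊆ uIcc 0 y := by rw [uIcc_of_ge hy0']
    have hmem : ∀ t ∈ Icc y (0:ℝ), -1 < t := fun t ht => lt_of_lt_of_le hy ht.1
    have hmono' : MonotoneOn h' (Icc y 0) := by
      apply monotoneOn_of_deriv_nonneg (convex_Icc y 0)
      · exact fun t ht => ((hder' t (hmem t ht)).continuousAt).continuousWithinAt
      · intro t ht
        rw [interior_Icc] at ht
        exact (hder' t (lt_trans hy ht.1)).differentiableAt.differentiableWithinAt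
      · intro t ht
        rw [interior_Icc] at ht
        have ht' : -1 < t := lt_trans hy ht.1
        rw [(hder' t ht').deriv]
        have := hM t (hsub ⟨le_of_lt ht.1, le_of_lt ht.2⟩)
        linarith [this]
    have hanti : AntitoneOn h (Icc y 0) := by
      apply antitoneOn_of_deriv_nonpos (convex_Icc y 0)
      · exact fun t ht => ((hder t (hmem t ht)).continuousAt).continuousWithinAt
      · intro t ht
        rw [interior_Icc] at ht
        exact (hder t (lt_trans hy ht.1)).differentiableAt.differentiableWithinAt
      · intro t ht
        rw [interior_Icc] at ht
        have ht' : -1 < t := lt_trans hy ht.1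
        rw [(hder t ht').deriv]
        have := hmono' ⟨le_of_lt ht.1, le_of_lt ht.2⟩ (right_mem_Icc.mpr hy0') (le_of_lt ht.2)
        rw [h'0] at this
        exact this
    have := hanti (left_mem_Icc.mpr hy0') (right_mem_Icc.mpr hy0') hy0'
    rw [h0] at this
    simp only [hh] at this
    linarith

theorem taylor_pointwise_bound (q ρ y : ℝ) (hq : 2 < q) (hρ0 : 0 < ρ) (hρ : ρ ≤ 1/3)
    (hy : |y| < Real.log (1/ρ) / (2 * (q - 2))) :
    |1 + y| ^ q ≤ 1 + q * y + ρ ^ (-(1:ℝ)/2) / 2 * q ^ 2 * y ^ 2 := by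
  set ω : ℝ := Real.log (1/ρ) / (2 * (q - 2)) with hω
  set K : ℝ := ρ ^ (-(1:ℝ)/2) with hK
  have hq2 : (0:ℝ) < q - 2 := by linarith
  have hlog : 0 < Real.log (1/ρ) := Real.log_pos (by rw [lt_div_iff₀ hρ0]; linarith)
  have hω0 : 0 < ω := div_pos hlog (by linarith)
  have hKexp : K = Real.exp (Real.log (1/ρ) / 2) := by
    rw [hK, Real.rpow_def_of_pos hρ0, one_div, Real.log_inv]
    ring_nf
  have hKbound : (1 + ω) ^ (q - 2) ≤ K := by
    have h1 : (1 + ω) ^ (q - 2) ≤ (Real.exp ω) ^ (q - 2) :=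
      Real.rpow_le_rpow (by linarith) (by linarith [Real.add_one_le_exp ω]) (le_of_lt hq2)
    have h2 : (Real.exp ω) ^ (q - 2) = Real.exp (ω * (q - 2)) := by
      rw [← Real.exp_mul]
    have h3 : ω * (q - 2) = Real.log (1/ρ) / 2 := by
      rw [hω]; field_simp
    rw [h2, h3] at h1
    rw [hKexp]; exact h1
  have hK0 : (0:ℝ) < K := by rw [hKexp]; exact Real.exp_pos _
  have hK32 : (3:ℝ)/2 ≤ K := by
    have hKsq : K * K = 1 / ρ := by
      rw [hK, ← Real.rpow_add hρ0]
      norm_num [Real.rpow_neg_one]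
    have h3 : (3:ℝ) ≤ 1/ρ := by rw [le_div_iff₀ hρ0]; linarith
    nlinarith
  have hωy : |y| < ω := hy
  clear_value K ω
  clear hy
  rcases lt_or_ge (-1 : ℝ) y with hy1 | hy1
  · -- 1 + y > 0
    have habs : |1 + y| = 1 + y := abs_of_pos (by linarith)
    rw [habs]
    have key := taylor_aux q (K * q ^ 2) y hq hy1 ?_
    · have hr : K * q ^ 2 / 2 * y ^ 2 = K / 2 * q ^ 2 * y ^ 2 := by ring
      rw [hr] at key
      exact key
    · intro t ht
      have htlo : -1 < t ∧ t ≤ ω := by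
        rcases le_total 0 y with h | h
        · rw [uIcc_of_le h] at ht
          constructor
          · linarith [ht.1]
          · have : y ≤ |y| := le_abs_self y
            linarith [ht.2]
        · rw [uIcc_of_ge h] at ht
          exact ⟨lt_of_lt_of_le hy1 ht.1, by linarith [ht.2]⟩
      have hb : (1 + t) ^ (q - 2) ≤ K := by
        calc (1 + t) ^ (q - 2) ≤ (1 + ω) ^ (q - 2) :=
              Real.rpow_le_rpow (by linarith [htlo.1]) (by linarith [htlo.2]) (le_of_lt hq2)
          _ ≤ K := hKbound
      have hpos : (0:ℝ) ≤ (1 + t) ^ (q - 2) := Real.rpow_nonneg (by linarith [htlo.1]) _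
      have h1 : q * (q-1) * (1+t) ^ (q-2) ≤ q * (q-1) * K := by
        apply mul_le_mul_of_nonneg_left hb; nlinarith
      nlinarith
  · -- y ≤ -1
    have habs : |1 + y| = -(1 + y) := abs_of_nonpos (by linarith)
    rw [habs]
    have hs1 : (1:ℝ) ≤ -y := by linarith
    have hsω : -y < ω := by
      have : |y| = -y := abs_of_nonpos (by linarith)
      rw [← this]; exact hωy
    have hgoal2 : -(1+y) = -y - 1 := by ring
    rw [hgoal2]
    have hstep : (-y - 1) ^ q ≤ K * y ^ 2 := by
      rcases eq_or_lt_of_le hs1 with h1 | h1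
      · rw [← h1]
        norm_num
        rw [Real.zero_rpow (by linarith)]
        positivity
      · have hs10 : 0 < -y - 1 := by linarith
        have hsp : (-y - 1) ^ q = (-y-1) ^ (2:ℝ) * (-y-1) ^ (q-2) := by
          rw [← Real.rpow_add hs10]; norm_num
        have hb : (-y - 1) ^ (q - 2) ≤ K :=
          (Real.rpow_le_rpow (le_of_lt hs10) (by linarith) (le_of_lt hq2)).trans hKbound
        have hsq : (-y-1) ^ (2:ℝ) = (-y-1)^2 := by
          rw [show ((2:ℝ) = ((2:ℕ):ℝ)) by norm_num, Real.rpow_natCast]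
        rw [hsp, hsq]
        have hpos : (0:ℝ) ≤ (-y-1)^2 := sq_nonneg _
        nlinarith
    have hfinal : K * y ^ 2 ≤ 1 + q * y + K / 2 * q ^ 2 * y ^ 2 := by
      have hq4 : (4:ℝ) < q ^ 2 := by nlinarith
      obtain ⟨A, hAdef, hA, h4A⟩ : ∃ A : ℝ, A = K * (q^2/2 - 1) ∧ 0 < A ∧ q ^ 2 ≤ 4 * A := by
        refine ⟨K * (q^2/2 - 1), rfl, mul_pos hK0 (by linarith), ?_⟩
        nlinarith [mul_nonneg (show (0:ℝ) ≤ 2*K-1 by linarith) (show (0:ℝ) ≤ q^2-4 by linarith)]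
      have key : 0 ≤ 1 + q * y + A * y ^ 2 := by
        have expand : 4 * A * (1 + q * y + A * y ^ 2) = (2*A*y + q)^2 + (4*A - q^2) := by ring
        have h1 : 0 ≤ 4 * A * (1 + q * y + A * y ^ 2) := by
          rw [expand]; have := sq_nonneg (2*A*y + q); linarith
        have h2 : (0:ℝ) < 4 * A := by linarith
        exact nonneg_of_mul_nonneg_right h1 h2
      have hr : K / 2 * q ^ 2 * y ^ 2 - K * y ^ 2 = A * y ^ 2 := by rw [hAdef]; ring
      linarith
    linarith
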